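/- Given any positive real numbers r_1, ..., r_n with n ≥ 4 (repetitions allowed), there exist points v_1, ..., v_n in ℝ³ with ‖v_i‖ = r_i for all i such that every v_i is an extreme point of the convex hull of {v_1, ..., v_n} and the origin lies in the interior of this convex hull. -/

import Mathlib

open Real

noncomputable def tpar (k : ℕ) : ℝ := if k = 3 then -1 else k

noncomputable def dir (k : ℕ) : ℝ × ℝ :=
  if k = 2 then (-1, 0)
  else ((1 - tpar k ^ 2) / (1 + tpar k ^ 2), 2 * tpar k / (1 + tpar k ^ 2))

lemma tpar_pos_denom (k : ℕ) : 0 < 1 + tpar k ^ 2 := by positivity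

lemma dir_norm (k : ℕ) : (dir k).1 ^ 2 + (dir k).2 ^ 2 = 1 := by
  unfold dir
  split
  · norm_num
  · have h := tpar_pos_denom k
    field_simp
    ring

lemma tpar_inj {a b : ℕ} (h : tpar a = tpar b) : a = b := by
  unfold tpar at h
  split_ifs at h with h1 h2 h2
  · omega
  · exfalso; have : (0:ℝ) ≤ (b:ℝ) := Nat.cast_nonneg b; rw [← h] at this; norm_num at this
  · exfalso; have : (0:ℝ) ≤ (a:ℝ) := Nat.cast_nonneg a; rw [h] at this; norm_num at this
  · exact_mod_cast h

lemma dir_inj {a b : ℕ} (h : dir a = dir b) : a = b := by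
  unfold dir at h
  split_ifs at h with h1 h2 h2
  · omega
  · exfalso
    have hd := tpar_pos_denom b
    have h1' := congrArg Prod.fst h
    simp at h1'
    have : -(1 + tpar b ^ 2) = 1 - tpar b ^ 2 := by
      field_simp at h1'
      linarith [h1']
    nlinarith
  · exfalso
    have hd := tpar_pos_denom a
    have h1' := congrArg Prod.fst h
    simp at h1'
    have : 1 - tpar a ^ 2 = -(1 + tpar a ^ 2) := by
      field_simp at h1'
      linarith [h1']
    nlinarith
  · have hda := tpar_pos_denom a
    have hdb := tpar_pos_denom b
    have hfst := congrArg Prod.fst h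
    have hsnd := congrArg Prod.snd h
    simp only at hfst hsnd
    rw [div_eq_div_iff (by positivity) (by positivity)] at hfst hsnd
    have hsq : tpar a ^ 2 = tpar b ^ 2 := by nlinarith
    rw [hsq] at hsnd
    have hz : (tpar a - tpar b) * (2 * (1 + tpar b ^ 2)) = 0 := by linear_combination hsnd
    have : tpar a = tpar b := by
      rcases mul_eq_zero.1 hz with h | h
      · linarith
      · nlinarith
    exact tpar_inj this

lemma aux_sphere {E : Type*} [NormedAddCommGroup E] [InnerProductSpace ℝ E]
    (u : E) (hu : ‖u‖ = 1) (s : Set E)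
    (hs : ∀ w ∈ s, ‖w‖ = 1 ∧ w ≠ u) : u ∉ convexHull ℝ s := by
  intro hmem
  have hlin : IsLinearMap ℝ (fun x : E => (inner ℝ u x : ℝ)) :=
    ⟨fun a b => inner_add_right u a b, fun c a => real_inner_smul_right u a c⟩
  have hconv : Convex ℝ {x : E | (inner ℝ u x : ℝ) < 1} := convex_halfSpace_lt hlin 1
  have hsub : s ⊆ {x : E | (inner ℝ u x : ℝ) < 1} := by
    intro w hw
    obtain ⟨hw1, hw2⟩ := hs w hw
    have hle : (inner ℝ u w : ℝ) ≤ 1 := by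
      have := real_inner_le_norm u w
      rwa [hu, hw1, one_mul] at this
    rcases lt_or_eq_of_le hle with h | h
    · exact h
    · exfalso
      have hz : ‖u - w‖ ^ 2 = 0 := by
        rw [norm_sub_sq_real, hu, hw1, h]; ring
      have : u = w := by
        have := pow_eq_zero_iff (n := 2) (by norm_num) |>.1 hz
        rwa [norm_eq_zero, sub_eq_zero] at this
      exact hw2 this.symm
  have := convexHull_min hsub hconv hmem
  simp only [Set.mem_setOf_eq] at this
  rw [real_inner_self_eq_norm_sq, hu] at this
  norm_num at this

lemma aux_interior {C : Set (EuclideanSpace ℝ (Fin 3))} (hC : Convex ℝ C)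
    {a b c : ℝ} (ha : 0 < a) (hb : 0 < b) (hc : 0 < c)
    (h1p : (!₂[a,0,0] : EuclideanSpace ℝ (Fin 3)) ∈ C)
    (h1m : (!₂[-a,0,0] : EuclideanSpace ℝ (Fin 3)) ∈ C)
    (h2p : (!₂[0,b,0] : EuclideanSpace ℝ (Fin 3)) ∈ C)
    (h2m : (!₂[0,-b,0] : EuclideanSpace ℝ (Fin 3)) ∈ C)
    (h3p : (!₂[0,0,c] : EuclideanSpace ℝ (Fin 3)) ∈ C)
    (h3m : (!₂[0,0,-c] : EuclideanSpace ℝ (Fin 3)) ∈ C)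
    (h0 : (0 : EuclideanSpace ℝ (Fin 3)) ∈ C) :
    (0 : EuclideanSpace ℝ (Fin 3)) ∈ interior C := by
  rw [mem_interior]
  refine ⟨{x : EuclideanSpace ℝ (Fin 3) | |x 0|/a + |x 1|/b + |x 2|/c < 1}, ?_, ?_, ?_⟩
  · intro x hx
    simp only [Set.mem_setOf_eq] at hx
    set w1 : ℝ := |x 0|/a with hw1
    set w2 : ℝ := |x 1|/b with hw2
    set w3 : ℝ := |x 2|/c with hw3
    have hw1n : 0 ≤ w1 := by positivity
    have hw2n : 0 ≤ w2 := by positivity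
    have hw3n : 0 ≤ w3 := by positivity
    set z1 : EuclideanSpace ℝ (Fin 3) := if 0 ≤ x 0 then !₂[a,0,0] else !₂[-a,0,0] with hz1
    set z2 : EuclideanSpace ℝ (Fin 3) := if 0 ≤ x 1 then !₂[0,b,0] else !₂[0,-b,0] with hz2
    set z3 : EuclideanSpace ℝ (Fin 3) := if 0 ≤ x 2 then !₂[0,0,c] else !₂[0,0,-c] with hz3
    have hmem : ∑ i : Fin 4, (![1 - (w1+w2+w3), w1, w2, w3] : Fin 4 → ℝ) i •
        (![0, z1, z2, z3] : Fin 4 → EuclideanSpace ℝ (Fin 3)) i ∈ C := by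
      apply hC.sum_mem
      · intro i _
        fin_cases i <;> simp <;> linarith
      · simp [Fin.sum_univ_four]; ring
      · intro i _
        fin_cases i <;> simp only [Matrix.cons_val_zero, Matrix.cons_val_one, Matrix.head_cons,
            Matrix.cons_val_two, Matrix.cons_val_three, Matrix.tail_cons]
        · exact h0
        · rw [hz1]; split_ifs <;> assumption
        · rw [hz2]; split_ifs <;> assumption
        · rw [hz3]; split_ifs <;> assumption
    have hx_eq : ∑ i : Fin 4, (![1 - (w1+w2+w3), w1, w2, w3] : Fin 4 → ℝ) i •
        (![0, z1, z2, z3] : Fin 4 → EuclideanSpace ℝ (Fin 3)) i = x := by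
      rw [Fin.sum_univ_four]
      ext j
      simp only [Matrix.cons_val_zero, Matrix.cons_val_one, Matrix.head_cons,
        Matrix.cons_val_two, Matrix.cons_val_three, Matrix.tail_cons,
        PiLp.add_apply, PiLp.smul_apply, PiLp.zero_apply, smul_eq_mul, mul_zero]
      fin_cases j
      · rw [hz1]
        split_ifs with h
        · simp only [hz2, hz3]
          split_ifs <;> simp [hw1, abs_of_nonneg h, div_mul_cancel₀, ne_of_gt ha]
        · simp only [hz2, hz3]
          push_neg at h
          split_ifs <;> simp [hw1, abs_of_neg h] <;> field_simp
      · rw [hz2]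
        split_ifs with h
        · simp only [hz1, hz3]
          split_ifs <;> simp [hw2, abs_of_nonneg h, div_mul_cancel₀, ne_of_gt hb]
        · simp only [hz1, hz3]
          push_neg at h
          split_ifs <;> simp [hw2, abs_of_neg h] <;> field_simp
      · rw [hz3]
        split_ifs with h
        · simp only [hz1, hz2]
          split_ifs <;> simp [hw3, abs_of_nonneg h, div_mul_cancel₀, ne_of_gt hc]
        · simp only [hz1, hz2]
          push_neg at h
          split_ifs <;> simp [hw3, abs_of_neg h] <;> field_simp
    rw [hx_eq] at hmem
    exact hmem
  · apply isOpen_lt _ continuous_const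
    have c0 := (EuclideanSpace.proj (0 : Fin 3) : EuclideanSpace ℝ (Fin 3) →L[ℝ] ℝ).continuous
    have c1 := (EuclideanSpace.proj (1 : Fin 3) : EuclideanSpace ℝ (Fin 3) →L[ℝ] ℝ).continuous
    have c2 := (EuclideanSpace.proj (2 : Fin 3) : EuclideanSpace ℝ (Fin 3) →L[ℝ] ℝ).continuous
    exact (((c0.abs.div_const a).add (c1.abs.div_const b)).add (c2.abs.div_const c))
  · simp [ha, hb, hc]

lemma comb2 (α β a1 a2 a3 b1 b2 b3 : ℝ) :
    α • (!₂[a1,a2,a3] : EuclideanSpace ℝ (Fin 3)) + β • (!₂[b1,b2,b3] : EuclideanSpace ℝ (Fin 3))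
      = !₂[α*a1+β*b1, α*a2+β*b2, α*a3+β*b3] := by
  ext j
  fin_cases j <;>
    simp [PiLp.add_apply, PiLp.smul_apply]

lemma zero_vec3 : (0 : EuclideanSpace ℝ (Fin 3)) = !₂[0,0,0] := by
  ext j; fin_cases j <;> simp

lemma scale_mem {C : Set (EuclideanSpace ℝ (Fin 3))} (hC : Convex ℝ C) {s t u α : ℝ}
    (h : (!₂[s,t,u] : EuclideanSpace ℝ (Fin 3)) ∈ C)
    (h0 : (0 : EuclideanSpace ℝ (Fin 3)) ∈ C)
    (h1 : 0 ≤ α) (h2 : α ≤ 1) :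
    (!₂[α*s,α*t,α*u] : EuclideanSpace ℝ (Fin 3)) ∈ C := by
  have hmem := hC h h0 h1 (by linarith : (0:ℝ) ≤ 1 - α) (by ring)
  rw [zero_vec3, comb2] at hmem
  have he : (!₂[α*s+(1-α)*0, α*t+(1-α)*0, α*u+(1-α)*0] : EuclideanSpace ℝ (Fin 3))
      = !₂[α*s,α*t,α*u] := by norm_num
  rwa [he] at hmem

lemma dir0 : dir 0 = (1,0) := by simp [dir, tpar]
lemma dir1 : dir 1 = (0,1) := by norm_num [dir, tpar]
lemma dir2 : dir 2 = (-1,0) := by simp [dir]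
lemma dir3 : dir 3 = (0,-1) := by norm_num [dir, tpar]

lemma mem_comb2 {C : Set (EuclideanSpace ℝ (Fin 3))} (hC : Convex ℝ C)
    {u w x : EuclideanSpace ℝ (Fin 3)} {α β : ℝ} (hu : u ∈ C) (hw : w ∈ C)
    (hα : 0 ≤ α) (hβ : 0 ≤ β) (hαβ : α + β = 1)
    (hx : α • u + β • w = x) : x ∈ C := hx ▸ hC hu hw hα hβ hαβ

set_option maxHeartbeats 2000000 in
theorem stmt9 (n : ℕ) (hn : 4 ≤ n) (r : Fin n → ℝ) (hpos : ∀ i, 0 < r i) :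
    ∃ v : Fin n → EuclideanSpace ℝ (Fin 3),
      (∀ i, ‖v i‖ = r i) ∧
      (∀ i, v i ∉ convexHull ℝ (v '' {j | j ≠ i})) ∧
      (0 : EuclideanSpace ℝ (Fin 3)) ∈ interior (convexHull ℝ (Set.range v)) := by
  classical
  have h4 : 0 < n := by omega
  have hne : (Finset.univ : Finset (Fin n)).Nonempty := ⟨⟨0, h4⟩, Finset.mem_univ _⟩
  set m := Finset.univ.inf' hne r with hm
  set M := Finset.univ.sup' hne r with hM
  have hmpos : 0 < m := (Finset.lt_inf'_iff hne).2 fun i _ => hpos i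
  have hmle : ∀ i, m ≤ r i := fun i => Finset.inf'_le r (Finset.mem_univ i)
  have hleM : ∀ i, r i ≤ M := fun i => Finset.le_sup' r (Finset.mem_univ i)
  have hMpos : 0 < M := lt_of_lt_of_le hmpos ((hmle ⟨0, h4⟩).trans (hleM ⟨0, h4⟩))
  obtain ⟨A, B, hApos, hBpos, hAlt, hBgt⟩ :
      ∃ A B : ℝ, 0 < A ∧ 0 < B ∧ (∀ i, A < r i ^ 2) ∧ (∀ i, r i ^ 2 < B) :=
    ⟨m^2/2, 2*M^2, by positivity, by positivity,
      fun i => by nlinarith [hmle i, hpos i],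
      fun i => by nlinarith [hleM i, hpos i]⟩
  have hAB : A < B := lt_trans (hAlt ⟨0, h4⟩) (hBgt ⟨0, h4⟩)
  set X : Fin n → ℝ := fun i => Real.sqrt (A * (B - r i ^ 2) / (B - A)) with hXdef
  have hX2 : ∀ i, X i ^ 2 = A * (B - r i ^ 2) / (B - A) := fun i =>
    Real.sq_sqrt (le_of_lt (div_pos (mul_pos hApos (by have := hBgt i; linarith))
      (by linarith)))
  have hXpos : ∀ i, 0 < X i := fun i =>
    Real.sqrt_pos.2 (div_pos (mul_pos hApos (by have := hBgt i; linarith)) (by linarith))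
  have hXlt : ∀ i, X i ^ 2 < r i ^ 2 := by
    intro i
    rw [hX2 i]
    rw [div_lt_iff₀ (by linarith)]
    nlinarith [hAlt i, hBgt i]
  set P : Fin n → ℝ := fun i => Real.sqrt (r i ^ 2 - X i ^ 2) with hPdef
  have hP2 : ∀ i, P i ^ 2 = r i ^ 2 - X i ^ 2 := fun i =>
    Real.sq_sqrt (by have := hXlt i; linarith)
  have hPpos : ∀ i, 0 < P i := fun i => Real.sqrt_pos.2 (by have := hXlt i; linarith)
  have hell : ∀ i, X i ^ 2 / A + P i ^ 2 / B = 1 := by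
    intro i
    have hA0 : A ≠ 0 := ne_of_gt hApos
    have hB0 : B ≠ 0 := ne_of_gt hBpos
    have hD0 : B - A ≠ 0 := by linarith
    rw [hP2 i, hX2 i]
    field_simp
    ring
  set ε : Fin n → ℝ := fun i => if i.val = 1 ∨ i.val = 3 then -1 else 1 with hεdef
  have hε2 : ∀ i, ε i ^ 2 = 1 := by
    intro i
    simp only [hεdef]
    split_ifs <;> norm_num
  set v : Fin n → EuclideanSpace ℝ (Fin 3) :=
    fun i => !₂[ε i * X i, P i * (dir i.val).1, P i * (dir i.val).2] with hvdef
  have hnorm : ∀ i, ‖v i‖ = r i := by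
    intro i
    rw [EuclideanSpace.norm_eq]
    have hs : (∑ j : Fin 3, ‖v i j‖ ^ 2) = r i ^ 2 := by
      simp only [hvdef, Fin.sum_univ_three, Real.norm_eq_abs, sq_abs,
        Matrix.cons_val_zero, Matrix.cons_val_one, Matrix.head_cons,
        Matrix.cons_val_two, Matrix.tail_cons]
      linear_combination (X i ^ 2) * hε2 i + (P i ^ 2) * dir_norm i.val + hP2 i
    rw [hs, Real.sqrt_sq (le_of_lt (hpos i))]
  have hvinj : Function.Injective v := by
    intro i j hij
    have h0 : v i 0 = v j 0 := by rw [hij]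
    have h1 : v i 1 = v j 1 := by rw [hij]
    have h2 : v i 2 = v j 2 := by rw [hij]
    simp only [hvdef, Matrix.cons_val_zero, Matrix.cons_val_one, Matrix.head_cons,
      Matrix.cons_val_two, Matrix.tail_cons] at h0 h1 h2
    have hdi := dir_norm i.val
    have hdj := dir_norm j.val
    have hPP : P i ^ 2 = P j ^ 2 := by
      linear_combination (-(P i)^2) * hdi + (P j)^2 * hdj
        + (P i * (dir i.val).1 + P j * (dir j.val).1) * h1
        + (P i * (dir i.val).2 + P j * (dir j.val).2) * h2
    have hPeq : P i = P j := by
      rw [← Real.sqrt_sq (hPpos i).le, hPP, Real.sqrt_sq (hPpos j).le]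
    have hd1 : (dir i.val).1 = (dir j.val).1 := by
      rw [hPeq] at h1
      exact mul_left_cancel₀ (ne_of_gt (hPpos j)) h1
    have hd2 : (dir i.val).2 = (dir j.val).2 := by
      rw [hPeq] at h2
      exact mul_left_cancel₀ (ne_of_gt (hPpos j)) h2
    have : i.val = j.val := dir_inj (Prod.ext hd1 hd2)
    exact Fin.ext this
  refine ⟨v, hnorm, ?_, ?_⟩
  · -- extreme points
    intro i hmem
    set c : Fin 3 → ℝ := ![1/Real.sqrt A, 1/Real.sqrt B, 1/Real.sqrt B] with hcdef
    set T : EuclideanSpace ℝ (Fin 3) → EuclideanSpace ℝ (Fin 3) :=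
      fun x => WithLp.toLp 2 (fun j => c j * x j : Fin 3 → ℝ) with hTdef
    have hTapp : ∀ (x : EuclideanSpace ℝ (Fin 3)) (j : Fin 3), T x j = c j * x j :=
      fun x j => rfl
    have hTlin : IsLinearMap ℝ T := by
      constructor
      · intro x y
        ext j
        simp only [hTapp, PiLp.add_apply]
        ring
      · intro s x
        ext j
        simp only [hTapp, PiLp.smul_apply, smul_eq_mul]
        ring
    have hc0 : c 0 = 1/Real.sqrt A := rfl
    have hc1 : c 1 = 1/Real.sqrt B := rfl
    have hc2 : c 2 = 1/Real.sqrt B := rfl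
    have hsA : (1/Real.sqrt A)^2 = 1/A := by
      rw [div_pow, one_pow, Real.sq_sqrt hApos.le]
    have hsB : (1/Real.sqrt B)^2 = 1/B := by
      rw [div_pow, one_pow, Real.sq_sqrt hBpos.le]
    have hTnorm : ∀ k : Fin n, ‖T (v k)‖ = 1 := by
      intro k
      rw [EuclideanSpace.norm_eq]
      have hs : (∑ j : Fin 3, ‖T (v k) j‖ ^ 2) = 1 := by
        simp only [hTapp, hvdef, Fin.sum_univ_three, Real.norm_eq_abs, sq_abs,
          Matrix.cons_val_zero, Matrix.cons_val_one, Matrix.head_cons,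
          Matrix.cons_val_two, Matrix.tail_cons, hc0, hc1, hc2]
        linear_combination (ε k * X k)^2 * hsA + (X k^2 * (1/A)) * hε2 k
          + (P k^2 * ((dir k.val).1^2 + (dir k.val).2^2)) * hsB
          + (P k^2 * (1/B)) * dir_norm k.val + hell k
      rw [hs, Real.sqrt_one]
    have hTinj : Function.Injective T := by
      intro x y hxy
      ext j
      have := congrArg (fun z => z j) hxy
      simp only [hTapp] at this
      have hcj : c j ≠ 0 := by
        fin_cases j <;> simp [hc0, hc1, hc2] <;> positivity
      exact mul_left_cancel₀ hcj this
    have hmem' : T (v i) ∈ convexHull ℝ (T '' (v '' {j | j ≠ i})) := by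
      rw [← hTlin.image_convexHull]
      exact Set.mem_image_of_mem T hmem
    refine aux_sphere (T (v i)) (hTnorm i) _ ?_ hmem'
    rintro w ⟨y, ⟨j, hj, rfl⟩, rfl⟩
    refine ⟨hTnorm j, fun he => hj (hvinj (hTinj he))⟩
  · -- interior
    have hC : Convex ℝ (convexHull ℝ (Set.range v)) := convex_convexHull ℝ _
    have hr : ∀ k : Fin n, v k ∈ convexHull ℝ (Set.range v) :=
      fun k => subset_convexHull ℝ _ ⟨k, rfl⟩
    set i0 : Fin n := ⟨0, by omega⟩ with hi0
    set i1 : Fin n := ⟨1, by omega⟩ with hi1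
    set i2 : Fin n := ⟨2, by omega⟩ with hi2
    set i3 : Fin n := ⟨3, by omega⟩ with hi3
    have hP0 := hPpos i0
    have hP1 := hPpos i1
    have hP2 := hPpos i2
    have hP3 := hPpos i3
    have hX0 := hXpos i0
    have hX1 := hXpos i1
    have hX2' := hXpos i2
    have hX3 := hXpos i3
    have hv0 : v i0 = !₂[X i0, P i0, 0] := by
      ext j
      fin_cases j <;> simp [hvdef, hεdef, hi0, dir0]
    have hv1 : v i1 = !₂[-X i1, 0, P i1] := by
      ext j
      fin_cases j <;> simp [hvdef, hεdef, hi1, dir1]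
    have hv2 : v i2 = !₂[X i2, -P i2, 0] := by
      ext j
      fin_cases j <;> simp [hvdef, hεdef, hi2, dir2]
    have hv3 : v i3 = !₂[-X i3, 0, -P i3] := by
      ext j
      fin_cases j <;> simp [hvdef, hεdef, hi3, dir3]
    obtain ⟨p, hpdef⟩ : ∃ x : ℝ, x = (P i2 * X i0 + P i0 * X i2) / (P i0 + P i2) := ⟨_, rfl⟩
    obtain ⟨q, hqdef⟩ : ∃ x : ℝ, x = (P i3 * X i1 + P i1 * X i3) / (P i1 + P i3) := ⟨_, rfl⟩
    have hp : 0 < p := by rw [hpdef]; positivity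
    have hq : 0 < q := by rw [hqdef]; positivity
    have hmP : (!₂[p,0,0] : EuclideanSpace ℝ (Fin 3)) ∈ convexHull ℝ (Set.range v) := by
      refine mem_comb2 hC (hr i0) (hr i2) (α := P i2 / (P i0 + P i2)) (β := P i0 / (P i0 + P i2))
        (by positivity) (by positivity) (by field_simp <;> ring) ?_
      rw [hv0, hv2, comb2]
      ext j
      fin_cases j <;> simp [hpdef] <;> field_simp <;> ring
    have hmQ : (!₂[-q,0,0] : EuclideanSpace ℝ (Fin 3)) ∈ convexHull ℝ (Set.range v) := by
      refine mem_comb2 hC (hr i1) (hr i3) (α := P i3 / (P i1 + P i3)) (β := P i1 / (P i1 + P i3))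
        (by positivity) (by positivity) (by field_simp <;> ring) ?_
      rw [hv1, hv3, comb2]
      ext j
      fin_cases j <;> simp [hqdef] <;> field_simp <;> ring
    have hm0 : (0 : EuclideanSpace ℝ (Fin 3)) ∈ convexHull ℝ (Set.range v) := by
      refine mem_comb2 hC hmP hmQ (α := q / (p + q)) (β := p / (p + q))
        (by positivity) (by positivity) (by field_simp <;> ring) ?_
      rw [comb2, zero_vec3]
      ext j
      fin_cases j <;> simp <;> field_simp <;> ring
    obtain ⟨yb, hybdef⟩ : ∃ x : ℝ, x = q * P i0 / (q + X i0) := ⟨_, rfl⟩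
    obtain ⟨ym, hymdef⟩ : ∃ x : ℝ, x = q * P i2 / (q + X i2) := ⟨_, rfl⟩
    obtain ⟨zp, hzpdef⟩ : ∃ x : ℝ, x = p * P i1 / (p + X i1) := ⟨_, rfl⟩
    obtain ⟨zm, hzmdef⟩ : ∃ x : ℝ, x = p * P i3 / (p + X i3) := ⟨_, rfl⟩
    have hyb : 0 < yb := by rw [hybdef]; positivity
    have hym : 0 < ym := by rw [hymdef]; positivity
    have hzp : 0 < zp := by rw [hzpdef]; positivity
    have hzm : 0 < zm := by rw [hzmdef]; positivity
    have hmYp : (!₂[0,yb,0] : EuclideanSpace ℝ (Fin 3)) ∈ convexHull ℝ (Set.range v) := by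
      refine mem_comb2 hC (hr i0) hmQ (α := q / (q + X i0)) (β := X i0 / (q + X i0))
        (by positivity) (by positivity) (by field_simp <;> ring) ?_
      rw [hv0, comb2]
      ext j
      fin_cases j <;> simp [hybdef] <;> field_simp <;> ring
    have hmYm : (!₂[0,-ym,0] : EuclideanSpace ℝ (Fin 3)) ∈ convexHull ℝ (Set.range v) := by
      refine mem_comb2 hC (hr i2) hmQ (α := q / (q + X i2)) (β := X i2 / (q + X i2))
        (by positivity) (by positivity) (by field_simp <;> ring) ?_
      rw [hv2, comb2]
      ext j
      fin_cases j <;> simp [hymdef] <;> field_simp <;> ring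
    have hmZp : (!₂[0,0,zp] : EuclideanSpace ℝ (Fin 3)) ∈ convexHull ℝ (Set.range v) := by
      refine mem_comb2 hC (hr i1) hmP (α := p / (p + X i1)) (β := X i1 / (p + X i1))
        (by positivity) (by positivity) (by field_simp <;> ring) ?_
      rw [hv1, comb2]
      ext j
      fin_cases j <;> simp [hzpdef] <;> field_simp <;> ring
    have hmZm : (!₂[0,0,-zm] : EuclideanSpace ℝ (Fin 3)) ∈ convexHull ℝ (Set.range v) := by
      refine mem_comb2 hC (hr i3) hmP (α := p / (p + X i3)) (β := X i3 / (p + X i3))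
        (by positivity) (by positivity) (by field_simp <;> ring) ?_
      rw [hv3, comb2]
      ext j
      fin_cases j <;> simp [hzmdef] <;> field_simp <;> ring
    obtain ⟨a, hadef⟩ : ∃ x : ℝ, x = min p q := ⟨_, rfl⟩
    obtain ⟨b, hbdef⟩ : ∃ x : ℝ, x = min yb ym := ⟨_, rfl⟩
    obtain ⟨c, hcdef⟩ : ∃ x : ℝ, x = min zp zm := ⟨_, rfl⟩
    have ha : 0 < a := hadef ▸ lt_min hp hq
    have hb : 0 < b := hbdef ▸ lt_min hyb hym
    have hc : 0 < c := hcdef ▸ lt_min hzp hzm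
    have h1p : (!₂[a,0,0] : EuclideanSpace ℝ (Fin 3)) ∈ convexHull ℝ (Set.range v) := by
      have := scale_mem hC hmP hm0 (α := a/p) (by positivity)
        ((div_le_one hp).2 (hadef ▸ min_le_left _ _ : a ≤ p))
      have he : (!₂[a/p*p, a/p*0, a/p*0] : EuclideanSpace ℝ (Fin 3)) = !₂[a,0,0] := by
        rw [div_mul_cancel₀ _ (ne_of_gt hp)]
        norm_num
      rwa [he] at this
    have h1m : (!₂[-a,0,0] : EuclideanSpace ℝ (Fin 3)) ∈ convexHull ℝ (Set.range v) := by
      have := scale_mem hC hmQ hm0 (α := a/q) (by positivity)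
        ((div_le_one hq).2 (hadef ▸ min_le_right _ _ : a ≤ q))
      have he : (!₂[a/q*(-q), a/q*0, a/q*0] : EuclideanSpace ℝ (Fin 3)) = !₂[-a,0,0] := by
        rw [mul_neg, div_mul_cancel₀ _ (ne_of_gt hq)]
        norm_num
      rwa [he] at this
    have h2p : (!₂[0,b,0] : EuclideanSpace ℝ (Fin 3)) ∈ convexHull ℝ (Set.range v) := by
      have := scale_mem hC hmYp hm0 (α := b/yb) (by positivity)
        ((div_le_one hyb).2 (hbdef ▸ min_le_left _ _ : b ≤ yb))
      have he : (!₂[b/yb*0, b/yb*yb, b/yb*0] : EuclideanSpace ℝ (Fin 3)) = !₂[0,b,0] := by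
        rw [div_mul_cancel₀ _ (ne_of_gt hyb)]
        norm_num
      rwa [he] at this
    have h2m : (!₂[0,-b,0] : EuclideanSpace ℝ (Fin 3)) ∈ convexHull ℝ (Set.range v) := by
      have := scale_mem hC hmYm hm0 (α := b/ym) (by positivity)
        ((div_le_one hym).2 (hbdef ▸ min_le_right _ _ : b ≤ ym))
      have he : (!₂[b/ym*0, b/ym*(-ym), b/ym*0] : EuclideanSpace ℝ (Fin 3)) = !₂[0,-b,0] := by
        rw [mul_neg, div_mul_cancel₀ _ (ne_of_gt hym)]
        norm_num
      rwa [he] at this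
    have h3p : (!₂[0,0,c] : EuclideanSpace ℝ (Fin 3)) ∈ convexHull ℝ (Set.range v) := by
      have := scale_mem hC hmZp hm0 (α := c/zp) (by positivity)
        ((div_le_one hzp).2 (hcdef ▸ min_le_left _ _ : c ≤ zp))
      have he : (!₂[c/zp*0, c/zp*0, c/zp*zp] : EuclideanSpace ℝ (Fin 3)) = !₂[0,0,c] := by
        rw [div_mul_cancel₀ _ (ne_of_gt hzp)]
        norm_num
      rwa [he] at this
    have h3m : (!₂[0,0,-c] : EuclideanSpace ℝ (Fin 3)) ∈ convexHull ℝ (Set.range v) := by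
      have := scale_mem hC hmZm hm0 (α := c/zm) (by positivity)
        ((div_le_one hzm).2 (hcdef ▸ min_le_right _ _ : c ≤ zm))
      have he : (!₂[c/zm*0, c/zm*0, c/zm*(-zm)] : EuclideanSpace ℝ (Fin 3)) = !₂[0,0,-c] := by
        rw [mul_neg, div_mul_cancel₀ _ (ne_of_gt hzm)]
        norm_num
      rwa [he] at this
    exact aux_interior hC ha hb hc h1p h1m h2p h2m h3p h3m hm0
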